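/- Let f and g_r (r in a finite index set I) be continuously differentiable functions on ℝⁿ with f(0) = g_r(0) = 0. Suppose the linear program: minimize ∇f(0)·x subject to ∇g_r(0)·x ≥ 0 for all r ∈ I, has exactly the line E = span{e₁} as its solution set; suppose g_r(t e₁) = 0 for all small t and all r; and suppose t ↦ f(t e₁) has an isolated local minimum at t = 0. Then there exists ε > 0 such that x = 0 is the unique minimizer of f(x) subject to g_r(x) ≥ 0 for all r and ‖x‖ ≤ ε. -/

import Mathlib

open scoped RealInnerProductSpace

set_option maxHeartbeats 1000000

theorem sliced_nlp_local_min (n : ℕ) (hn : 0 < n) (ι : Type) [Fintype ι]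
    (f : EuclideanSpace ℝ (Fin n) → ℝ) (g : ι → EuclideanSpace ℝ (Fin n) → ℝ)
    (hf : ContDiff ℝ 1 f) (hg : ∀ r, ContDiff ℝ 1 (g r))
    (hf0 : f 0 = 0) (hg0 : ∀ r, g r 0 = 0)
    (e₁ : EuclideanSpace ℝ (Fin n)) (he₁ : e₁ = EuclideanSpace.single ⟨0, hn⟩ 1)
    (hLP : {x : EuclideanSpace ℝ (Fin n) |
        (∀ r, (0 : ℝ) ≤ inner ℝ (gradient (g r) 0) x) ∧
        ∀ y : EuclideanSpace ℝ (Fin n), (∀ r, (0 : ℝ) ≤ inner ℝ (gradient (g r) 0) y) →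
          (inner ℝ (gradient f 0) x : ℝ) ≤ inner ℝ (gradient f 0) y}
      = {x : EuclideanSpace ℝ (Fin n) | ∃ t : ℝ, x = t • e₁})
    (hzero : ∃ δ > (0 : ℝ), ∀ t : ℝ, |t| < δ → ∀ r, g r (t • e₁) = 0)
    (hmin : ∃ δ > (0 : ℝ), ∀ t : ℝ, |t| < δ → t ≠ 0 → f 0 < f (t • e₁)) :
    ∃ ε > (0 : ℝ), ∀ x : EuclideanSpace ℝ (Fin n),
      (∀ r, 0 ≤ g r x) → ‖x‖ ≤ ε → x ≠ 0 → f 0 < f x := by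
  classical
  obtain ⟨δ₀, hδ₀, hz⟩ := hzero
  obtain ⟨δ₁, hδ₁, hm⟩ := hmin
  have hne : ‖e₁‖ = 1 := by rw [he₁, EuclideanSpace.norm_single]; norm_num
  -- Facts from the LP hypothesis
  have hA : ∀ y : EuclideanSpace ℝ (Fin n),
      (∀ r, (0:ℝ) ≤ ⟪gradient (g r) 0, y⟫) → 0 ≤ ⟪gradient f 0, y⟫ := by
    intro y hy
    have h0 : (0 : EuclideanSpace ℝ (Fin n)) ∈
        {x : EuclideanSpace ℝ (Fin n) | ∃ t : ℝ, x = t • e₁} := ⟨0, by simp⟩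
    rw [← hLP] at h0
    simpa using h0.2 y hy
  have hB : ∀ y : EuclideanSpace ℝ (Fin n),
      (∀ r, (0:ℝ) ≤ ⟪gradient (g r) 0, y⟫) → ⟪gradient f 0, y⟫ = 0 →
      ∃ t : ℝ, y = t • e₁ := by
    intro y hy hcy
    have hy' : y ∈ {x : EuclideanSpace ℝ (Fin n) |
        (∀ r, (0 : ℝ) ≤ inner ℝ (gradient (g r) 0) x) ∧
        ∀ y : EuclideanSpace ℝ (Fin n), (∀ r, (0 : ℝ) ≤ inner ℝ (gradient (g r) 0) y) →
          (inner ℝ (gradient f 0) x : ℝ) ≤ inner ℝ (gradient f 0) y} :=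
      ⟨hy, fun y' hy' => by rw [hcy]; exact hA y' hy'⟩
    rwa [hLP] at hy'
  have hstrict : ∀ u : EuclideanSpace ℝ (Fin n), ⟪u, e₁⟫ = 0 → ‖u‖ = 1 →
      (∀ r, (0:ℝ) ≤ ⟪gradient (g r) 0, u⟫) → 0 < ⟪gradient f 0, u⟫ := by
    intro u hu hnu hfeas
    rcases lt_or_eq_of_le (hA u hfeas) with h | h
    · exact h
    · exfalso
      obtain ⟨t, ht⟩ := hB u hfeas h.symm
      rw [ht] at hu
      rw [real_inner_smul_left, real_inner_self_eq_norm_sq, hne] at hu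
      have ht0 : t = 0 := by simpa using hu
      rw [ht0, zero_smul] at ht
      rw [ht, norm_zero] at hnu
      norm_num at hnu
  -- the penalty sum
  set S : EuclideanSpace ℝ (Fin n) → ℝ :=
    fun h => ∑ r : ι, max 0 (-⟪gradient (g r) 0, h⟫) with hSdef
  have hSnonneg : ∀ h, 0 ≤ S h := fun h => Finset.sum_nonneg fun r _ => le_max_left _ _
  have hScont : Continuous S := by
    apply continuous_finset_sum
    intro r _
    exact continuous_const.max ((continuous_const.inner continuous_id).neg)
  have hShomog : ∀ (s : ℝ), 0 ≤ s → ∀ h, S (s • h) = s * S h := by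
    intro s hs h
    show (∑ r : ι, max 0 (-⟪gradient (g r) 0, s • h⟫))
      = s * ∑ r : ι, max 0 (-⟪gradient (g r) 0, h⟫)
    rw [Finset.mul_sum]
    refine Finset.sum_congr rfl fun r _ => ?_
    rw [real_inner_smul_right, mul_max_of_nonneg _ _ hs, mul_zero, mul_neg]
  -- key quantitative lemma by compactness
  have key : ∃ K β : ℝ, 0 < K ∧ 0 < β ∧ ∀ h : EuclideanSpace ℝ (Fin n),
      ⟪h, e₁⟫ = 0 → β * ‖h‖ ≤ ⟪gradient f 0, h⟫ + K * S h := by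
    by_contra hcon
    push_neg at hcon
    set C : ℕ → Set (EuclideanSpace ℝ (Fin n)) := fun k =>
      {u | ‖u‖ = 1 ∧ ⟪u, e₁⟫ = 0 ∧
        ⟪gradient f 0, u⟫ + ((k:ℝ)+1) * S u ≤ 1/((k:ℝ)+1)} with hCdef
    have hclosed : ∀ k, IsClosed (C k) := by
      intro k
      refine IsClosed.inter (isClosed_eq continuous_norm continuous_const) ?_
      refine IsClosed.inter (isClosed_eq (continuous_id.inner continuous_const)
        continuous_const) ?_
      exact isClosed_le (((continuous_const.inner continuous_id)).add
        (continuous_const.mul hScont)) continuous_const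
    have hnonempty : ∀ k, (C k).Nonempty := by
      intro k
      have hk1 : (0:ℝ) < (k:ℝ)+1 := by positivity
      obtain ⟨h, hhe, hhlt⟩ := hcon ((k:ℝ)+1) (1/((k:ℝ)+1)) hk1 (by positivity)
      have hh0 : h ≠ 0 := by
        rintro rfl
        simp only [inner_zero_right, norm_zero, mul_zero] at hhlt
        have : S 0 = 0 := by
          have := hShomog 0 le_rfl 0
          simpa using this
        rw [this] at hhlt
        simp at hhlt
      have hnh : (0:ℝ) < ‖h‖ := norm_pos_iff.mpr hh0
      refine ⟨‖h‖⁻¹ • h, ?_, ?_, ?_⟩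
      · rw [norm_smul, norm_inv, norm_norm, inv_mul_cancel₀ (ne_of_gt hnh)]
      · rw [real_inner_smul_left, hhe, mul_zero]
      · rw [real_inner_smul_right, hShomog _ (by positivity)]
        have : ⟪gradient f 0, h⟫ + ((k:ℝ)+1) * S h ≤ 1/((k:ℝ)+1) * ‖h‖ := le_of_lt hhlt
        calc ‖h‖⁻¹ * ⟪gradient f 0, h⟫ + ((k:ℝ)+1) * (‖h‖⁻¹ * S h)
            = ‖h‖⁻¹ * (⟪gradient f 0, h⟫ + ((k:ℝ)+1) * S h) := by ring
          _ ≤ ‖h‖⁻¹ * (1/((k:ℝ)+1) * ‖h‖) := by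
              exact mul_le_mul_of_nonneg_left this (by positivity)
          _ = 1/((k:ℝ)+1) := by field_simp
    have hsubset : ∀ k, C (k+1) ⊆ C k := by
      intro k u hu
      obtain ⟨h1, h2, h3⟩ := hu
      refine ⟨h1, h2, ?_⟩
      have hS := hSnonneg u
      have hcast : ((k+1:ℕ):ℝ) = (k:ℝ)+1 := by push_cast; ring
      rw [hcast] at h3
      have hk1 : (0:ℝ) < (k:ℝ)+1 := by positivity
      have h4 : ⟪gradient f 0, u⟫ + ((k:ℝ)+1) * S u ≤
          ⟪gradient f 0, u⟫ + ((k:ℝ)+1+1) * S u := by nlinarith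
      have h5 : 1/((k:ℝ)+1+1) ≤ 1/((k:ℝ)+1) := by
        apply one_div_le_one_div_of_le hk1; linarith
      linarith
    have hcpt : IsCompact (C 0) := by
      refine IsCompact.of_isClosed_subset (isCompact_sphere (0 : EuclideanSpace ℝ (Fin n)) 1)
        (hclosed 0) ?_
      intro u hu
      rw [mem_sphere_zero_iff_norm]
      exact hu.1
    obtain ⟨u, hu⟩ := IsCompact.nonempty_iInter_of_sequence_nonempty_isCompact_isClosed
      C hsubset hnonempty hcpt hclosed
    simp only [Set.mem_iInter] at hu
    have hun : ‖u‖ = 1 := (hu 0).1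
    have hue : ⟪u, e₁⟫ = 0 := (hu 0).2.1
    have hubd : ∀ k : ℕ, ⟪gradient f 0, u⟫ + ((k:ℝ)+1) * S u ≤ 1/((k:ℝ)+1) :=
      fun k => (hu k).2.2
    have hSu : S u = 0 := by
      by_contra hS0
      have hSpos : 0 < S u := lt_of_le_of_ne (hSnonneg u) (Ne.symm hS0)
      obtain ⟨k, hk⟩ := exists_nat_gt ((1 - ⟪gradient f 0, u⟫) / S u)
      rw [div_lt_iff₀ hSpos] at hk
      have h1 := hubd k
      have h2 : 1/((k:ℝ)+1) ≤ 1 := by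
        rw [div_le_one (by positivity)]
        have := Nat.cast_nonneg (α := ℝ) k
        linarith
      nlinarith
    have hfeas : ∀ r, (0:ℝ) ≤ ⟪gradient (g r) 0, u⟫ := by
      intro r
      by_contra hr
      push_neg at hr
      have hpos : 0 < max 0 (-⟪gradient (g r) 0, u⟫) :=
        lt_max_of_lt_right (by linarith)
      have hle : max 0 (-⟪gradient (g r) 0, u⟫) ≤ S u :=
        Finset.single_le_sum (f := fun r' => max 0 (-⟪gradient (g r') 0, u⟫))
          (fun r' _ => le_max_left _ _) (Finset.mem_univ r)
      rw [hSu] at hle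
      linarith
    have hcu : ⟪gradient f 0, u⟫ ≤ 0 := by
      refine le_of_forall_pos_le_add ?_
      intro ε hε
      obtain ⟨k, hk⟩ := exists_nat_one_div_lt hε
      have := hubd k
      rw [hSu, mul_zero, add_zero] at this
      linarith
    exact absurd (hstrict u hue hun hfeas) (not_lt.mpr hcu)
  obtain ⟨K, β, hK, hβ, hkey⟩ := key
  -- relate inner products with gradients to the Fréchet derivative
  have hcf : ∀ y, ⟪gradient f 0, y⟫ = fderiv ℝ f 0 y :=
    fun y => InnerProductSpace.toDual_symm_apply
  have hag : ∀ r y, ⟪gradient (g r) 0, y⟫ = fderiv ℝ (g r) 0 y :=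
    fun r y => InnerProductSpace.toDual_symm_apply
  -- the error functional and its continuity
  obtain ⟨ε₁, hε₁, hDε⟩ : ∃ ε₁ : ℝ, 0 < ε₁ ∧
      (K * (Fintype.card ι : ℝ) + 1) * ε₁ = β / 2 := by
    refine ⟨β / (2 * (K * (Fintype.card ι : ℝ) + 1)), by positivity, ?_⟩
    field_simp
  set Φ : EuclideanSpace ℝ (Fin n) → ℝ := fun y =>
    ‖fderiv ℝ f y - fderiv ℝ f 0‖ + ∑ r : ι, ‖fderiv ℝ (g r) y - fderiv ℝ (g r) 0‖ with hΦdef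
  have hΦc : Continuous Φ := by
    apply Continuous.add
    · exact ((hf.continuous_fderiv one_ne_zero).sub continuous_const).norm
    · exact continuous_finset_sum _ fun r _ =>
        (((hg r).continuous_fderiv one_ne_zero).sub continuous_const).norm
  have hΦ0 : Φ 0 = 0 := by simp [hΦdef]
  have hΦct := hΦc.continuousAt (x := 0)
  rw [Metric.continuousAt_iff] at hΦct
  obtain ⟨ρ, hρ, hball⟩ := hΦct ε₁ hε₁
  have hbnd : ∀ y : EuclideanSpace ℝ (Fin n), ‖y‖ < ρ →
      ‖fderiv ℝ f y - fderiv ℝ f 0‖ ≤ ε₁ ∧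
      ∀ r, ‖fderiv ℝ (g r) y - fderiv ℝ (g r) 0‖ ≤ ε₁ := by
    intro y hy
    have h1 := hball (x := y) (by simpa [dist_eq_norm] using hy)
    rw [hΦ0, Real.dist_eq, sub_zero] at h1
    have h2 : Φ y < ε₁ := lt_of_abs_lt h1
    have hterm : ∀ r, (0:ℝ) ≤ ‖fderiv ℝ (g r) y - fderiv ℝ (g r) 0‖ :=
      fun r => norm_nonneg _
    have hsum : (0:ℝ) ≤ ∑ r : ι, ‖fderiv ℝ (g r) y - fderiv ℝ (g r) 0‖ :=
      Finset.sum_nonneg fun r _ => norm_nonneg _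
    constructor
    · have : ‖fderiv ℝ f y - fderiv ℝ f 0‖ ≤ Φ y := by
        simp only [hΦdef]; linarith
      linarith
    · intro r
      have hle : ‖fderiv ℝ (g r) y - fderiv ℝ (g r) 0‖ ≤
          ∑ r : ι, ‖fderiv ℝ (g r) y - fderiv ℝ (g r) 0‖ :=
        Finset.single_le_sum (f := fun r' => ‖fderiv ℝ (g r') y - fderiv ℝ (g r') 0‖)
          (fun r' _ => norm_nonneg _) (Finset.mem_univ r)
      have : ∑ r : ι, ‖fderiv ℝ (g r) y - fderiv ℝ (g r) 0‖ ≤ Φ y := by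
        simp only [hΦdef]; linarith [norm_nonneg (fderiv ℝ f y - fderiv ℝ f 0)]
      linarith
  -- the final ε
  refine ⟨min (ρ/2) (min δ₀ δ₁ / 2), by positivity, ?_⟩
  intro x hfx hxε hx0
  set ε := min (ρ/2) (min δ₀ δ₁ / 2) with hεdef
  have hxρ : ‖x‖ ≤ ρ/2 := le_trans hxε (min_le_left _ _)
  have hxδ : ‖x‖ < min δ₀ δ₁ := by
    have := le_trans hxε (min_le_right _ _)
    have hδ : 0 < min δ₀ δ₁ := lt_min hδ₀ hδ₁
    linarith
  set t : ℝ := ⟪e₁, x⟫ with htdef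
  set h : EuclideanSpace ℝ (Fin n) := x - t • e₁ with hhdef
  have hxeq : x = t • e₁ + h := by rw [hhdef]; abel
  have hhe : ⟪h, e₁⟫ = 0 := by
    have h1 : ⟪h, e₁⟫ = ⟪x, e₁⟫ - t * (‖e₁‖ * ‖e₁‖) := by
      rw [hhdef, inner_sub_left, real_inner_smul_left, real_inner_self_eq_norm_mul_norm]
    rw [h1, hne, htdef, real_inner_comm e₁ x]
    ring
  have hperp : ⟪t • e₁, h⟫ = 0 := by
    rw [real_inner_smul_left, real_inner_comm, hhe, mul_zero]
  have hpyth : ‖x‖^2 = ‖t • e₁‖^2 + ‖h‖^2 := by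
    conv_lhs => rw [hxeq]
    rw [norm_add_sq_real, hperp]
    ring
  have hte : ‖t • e₁‖ ≤ ‖x‖ := by nlinarith [norm_nonneg (t • e₁), norm_nonneg h, norm_nonneg x]
  have hhx : ‖h‖ ≤ ‖x‖ := by nlinarith [norm_nonneg (t • e₁), norm_nonneg h, norm_nonneg x]
  have habs : |t| = ‖t • e₁‖ := by rw [norm_smul, hne, mul_one, Real.norm_eq_abs]
  have htδ₀ : |t| < δ₀ := by
    rw [habs]
    calc ‖t • e₁‖ ≤ ‖x‖ := hte
    _ < min δ₀ δ₁ := hxδ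
    _ ≤ δ₀ := min_le_left _ _
  have htδ₁ : |t| < δ₁ := by
    rw [habs]
    calc ‖t • e₁‖ ≤ ‖x‖ := hte
    _ < min δ₀ δ₁ := hxδ
    _ ≤ δ₁ := min_le_right _ _
  have hgzero : ∀ r, g r (t • e₁) = 0 := hz t htδ₀
  -- mean value estimates on the closed ball of radius ρ/2
  have hconv : Convex ℝ (Metric.closedBall (0 : EuclideanSpace ℝ (Fin n)) (ρ/2)) :=
    convex_closedBall _ _
  have hxmem : x ∈ Metric.closedBall (0 : EuclideanSpace ℝ (Fin n)) (ρ/2) := by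
    rw [mem_closedBall_zero_iff]; exact hxρ
  have htmem : t • e₁ ∈ Metric.closedBall (0 : EuclideanSpace ℝ (Fin n)) (ρ/2) := by
    rw [mem_closedBall_zero_iff]; exact le_trans hte hxρ
  have hballlt : ∀ z ∈ Metric.closedBall (0 : EuclideanSpace ℝ (Fin n)) (ρ/2), ‖z‖ < ρ := by
    intro z hz'
    rw [mem_closedBall_zero_iff] at hz'
    linarith
  have hmvtf : |f x - f (t • e₁) - fderiv ℝ f 0 (x - t • e₁)| ≤ ε₁ * ‖x - t • e₁‖ := by
    have := hconv.norm_image_sub_le_of_norm_hasFDerivWithin_le'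
      (f := f) (f' := fun z => fderiv ℝ f z) (φ := fderiv ℝ f 0) (C := ε₁)
      (fun z hz' => ((hf.differentiable one_ne_zero) z).hasFDerivAt.hasFDerivWithinAt)
      (fun z hz' => (hbnd z (hballlt z hz')).1) htmem hxmem
    simpa [Real.norm_eq_abs] using this
  have hmvtg : ∀ r, |g r x - g r (t • e₁) - fderiv ℝ (g r) 0 (x - t • e₁)| ≤ ε₁ * ‖x - t • e₁‖ := by
    intro r
    have := hconv.norm_image_sub_le_of_norm_hasFDerivWithin_le'
      (f := g r) (f' := fun z => fderiv ℝ (g r) z) (φ := fderiv ℝ (g r) 0) (C := ε₁)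
      (fun z hz' => (((hg r).differentiable one_ne_zero) z).hasFDerivAt.hasFDerivWithinAt)
      (fun z hz' => (hbnd z (hballlt z hz')).2 r) htmem hxmem
    simpa [Real.norm_eq_abs] using this
  have hxsub : x - t • e₁ = h := by rw [hhdef]
  rw [hxsub] at hmvtf hmvtg
  -- constraint bounds
  have hmax : ∀ r, max 0 (-⟪gradient (g r) 0, h⟫) ≤ ε₁ * ‖h‖ := by
    intro r
    have h1 := hmvtg r
    rw [hgzero r, sub_zero] at h1
    have h2 : fderiv ℝ (g r) 0 h ≥ g r x - ε₁ * ‖h‖ := by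
      have := abs_le.mp h1
      linarith [this.1]
    have h3 : -⟪gradient (g r) 0, h⟫ ≤ ε₁ * ‖h‖ := by
      rw [hag]
      have := hfx r
      linarith
    exact max_le (by positivity) h3
  have hSh : S h ≤ (Fintype.card ι : ℝ) * (ε₁ * ‖h‖) := by
    calc S h ≤ ∑ _r : ι, ε₁ * ‖h‖ := Finset.sum_le_sum fun r _ => hmax r
    _ = (Fintype.card ι : ℝ) * (ε₁ * ‖h‖) := by
        rw [Finset.sum_const, nsmul_eq_mul, Finset.card_univ]
  have hkey' := hkey h hhe
  have hch : ⟪gradient f 0, h⟫ ≥ β * ‖h‖ - K * ((Fintype.card ι : ℝ) * (ε₁ * ‖h‖)) := by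
    have : K * S h ≤ K * ((Fintype.card ι : ℝ) * (ε₁ * ‖h‖)) :=
      mul_le_mul_of_nonneg_left hSh (le_of_lt hK)
    linarith
  have hfx' : f x ≥ f (t • e₁) + (β/2) * ‖h‖ := by
    have h1 : f x - f (t • e₁) ≥ ⟪gradient f 0, h⟫ - ε₁ * ‖h‖ := by
      rw [hcf]
      have := abs_le.mp hmvtf
      linarith [this.1]
    have h2 : ⟪gradient f 0, h⟫ - ε₁ * ‖h‖ ≥ (β/2) * ‖h‖ := by
      have h3 : (K * (Fintype.card ι : ℝ) + 1) * ε₁ * ‖h‖ = (β/2) * ‖h‖ := by rw [hDε]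
      linarith [hch, h3]
    linarith
  have hft : 0 ≤ f (t • e₁) := by
    rcases eq_or_ne t 0 with ht0 | ht0
    · rw [ht0, zero_smul, hf0]
    · have := hm t htδ₁ ht0
      rw [hf0] at this
      linarith
  rw [hf0]
  rcases eq_or_ne h 0 with hh0 | hh0
  · have hxeq' : x = t • e₁ := by rw [hxeq, hh0, add_zero]
    have ht0 : t ≠ 0 := by
      intro ht0'
      rw [ht0', zero_smul] at hxeq'
      exact hx0 hxeq'
    rw [hxeq']
    have := hm t htδ₁ ht0
    rwa [hf0] at this
  · have hhn : (0:ℝ) < ‖h‖ := norm_pos_iff.mpr hh0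
    nlinarith [hfx', hft]
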